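/- For every z ∈ ℂ \ [−1, 1], the Stieltjes transform of the Chebyshev weight of the second kind satisfies (2/π) · ∫_{−1}^{1} √(1 − x²)/(z − x) dx = 2z·(1 − √(1 − z⁻²)), where √ denotes the principal complex square root. -/

import Mathlib

open Complex Set

lemma cheb_aux_ineq (a b α β : ℝ) (h1 : α * β = a * b) (h2 : α ^ 2 - β ^ 2 = a ^ 2 - b ^ 2 - 1)
    (h3 : 0 ≤ α * a + β * b) (hoff : b = 0 → 1 < a ∨ a < -1)
    (x r : ℝ) (hr : r ^ 2 = 1 - x ^ 2) :
    0 < α * a + β * b - (α * x + b * r) := by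
  have key : (α * a + β * b) ^ 2 = (α ^ 2 + b ^ 2) * (a ^ 2 + b ^ 2) + b ^ 2 := by
    linear_combination 2 * a * b * h1 - b ^ 2 * h2
  have pos : α ^ 2 < (α ^ 2 + b ^ 2) * (a ^ 2 + b ^ 2) := by
    by_cases hb : b = 0
    · subst hb
      have ha2 : 1 < a ^ 2 := by rcases hoff rfl with h | h <;> nlinarith
      have hα : 0 < α ^ 2 := by nlinarith [sq_nonneg β]
      nlinarith [mul_pos hα (by linarith : (0:ℝ) < a ^ 2 - 1)]
    · have hb2 : 0 < b ^ 2 := by positivity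
      rcases le_or_gt 1 (a ^ 2 + b ^ 2) with hm | hm
      · nlinarith
      · have hq : α ^ 4 + α ^ 2 * (1 + b ^ 2 - a ^ 2) = a ^ 2 * b ^ 2 := by
          linear_combination (α * β + a * b) * h1 + α ^ 2 * h2
        have ha1 : a ^ 2 < 1 := by nlinarith
        set t := α ^ 2 with ht
        have htn : 0 ≤ t := sq_nonneg α
        set m := a ^ 2 + b ^ 2 with hmdef
        have hfirst : 0 < b ^ 2 * m - t * (1 - m) := by
          have h2f : 0 < b ^ 2 * m + t * (1 - m) + (1 - m) * (1 + b ^ 2 - a ^ 2) := by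
            have : 0 < m := by positivity
            nlinarith
          have hprod : (b ^ 2 * m - t * (1 - m)) *
              (b ^ 2 * m + t * (1 - m) + (1 - m) * (1 + b ^ 2 - a ^ 2)) = b ^ 4 := by
            linear_combination (-(1 - m) ^ 2) * hq
          have hb4 : 0 < b ^ 4 := by positivity
          by_contra hcon
          push_neg at hcon
          nlinarith
        nlinarith [hfirst]
  have hsum : 0 < α ^ 2 + b ^ 2 := by nlinarith [sq_nonneg α, sq_nonneg b, sq_nonneg a]
  have h5 : α ^ 2 + b ^ 2 < (α * a + β * b) ^ 2 := by nlinarith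
  have hS : 0 < α * a + β * b := by nlinarith
  have h4 : (α * x + b * r) ^ 2 ≤ α ^ 2 + b ^ 2 := by nlinarith [sq_nonneg (α * r - b * x)]
  nlinarith [h4, h5, hS]

set_option maxHeartbeats 2000000 in
theorem chebyshev_weight_stieltjes_transform (z : ℂ)
    (hz : z ∉ (fun x : ℝ => (x : ℂ)) '' Set.Icc (-1 : ℝ) 1) :
    (2 / Real.pi : ℂ) * ∫ x in (-1 : ℝ)..1, (Real.sqrt (1 - x ^ 2) : ℂ) / (z - x) =
      2 * z * (1 - (1 - 1 / z ^ 2) ^ ((1 : ℂ) / 2)) := by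
  have hzx : ∀ x : ℝ, x ∈ Set.Icc (-1 : ℝ) 1 → z - (x : ℂ) ≠ 0 := by
    intro x hx h
    exact hz ⟨x, hx, by rw [sub_eq_zero] at h; exact h.symm⟩
  have hz1 : z ≠ 1 := by
    have := hzx 1 (by norm_num); simpa [sub_eq_zero] using this.symm ∘ Eq.symm
  have hzm1 : z ≠ -1 := by
    have h := hzx (-1) (by norm_num); intro hh; apply h; rw [hh]; push_cast; ring
  have hz0 : z ≠ 0 := by
    have h := hzx 0 (by norm_num); intro hh; apply h; rw [hh]; push_cast; ring
  have hz2ne : z ^ 2 ≠ 1 := by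
    intro h
    rcases mul_eq_zero.mp (show (z - 1) * (z + 1) = 0 by linear_combination h) with h' | h'
    · exact hz1 (by linear_combination h')
    · exact hzm1 (by linear_combination h')
  set u : ℂ := (1 - 1 / z ^ 2) ^ ((1 : ℂ) / 2) with hu
  have hune : (1 - 1 / z ^ 2) ≠ 0 := by
    intro h
    apply hz2ne
    field_simp at h
    linear_combination h
  have hu2 : u ^ 2 = 1 - 1 / z ^ 2 := by
    rw [hu, ← Complex.cpow_nat_mul]
    norm_num
  set w : ℂ := z * u with hwdef
  have hw2 : w ^ 2 = z ^ 2 - 1 := by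
    rw [hwdef, mul_pow, hu2]
    field_simp
  have hw0 : w ≠ 0 := by
    intro h
    rw [h] at hw2
    exact hz2ne (by linear_combination -hw2)
  -- branch condition
  have hure : 0 ≤ u.re := by
    rw [hu, Complex.cpow_def_of_ne_zero hune, Complex.exp_re]
    apply mul_nonneg (Real.exp_pos _).le
    have him : (Complex.log (1 - 1 / z ^ 2) * (1 / 2)).im = (1 - 1 / z ^ 2).arg / 2 := by
      simp [Complex.mul_im, Complex.log_im]
      ring
    rw [him]
    apply Real.cos_nonneg_of_mem_Icc
    constructor
    · linarith [Complex.neg_pi_lt_arg (1 - 1 / z ^ 2)]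
    · linarith [Complex.arg_le_pi (1 - 1 / z ^ 2)]
  have h3 : 0 ≤ w.re * z.re + w.im * z.im := by
    have hconj : w * (starRingEnd ℂ) z = u * ((Complex.normSq z : ℝ) : ℂ) := by
      rw [hwdef, mul_comm z u, mul_assoc, Complex.mul_conj]
    have := congrArg Complex.re hconj
    simp [Complex.mul_re] at this
    rw [this]
    exact mul_nonneg hure (Complex.normSq_nonneg z)
  -- relations between w and z coordinates
  have hww : w * w = z * z - 1 := by linear_combination hw2
  have h1 : w.re * w.im = z.re * z.im := by
    have := congrArg Complex.im hww
    simp [Complex.mul_im] at this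
    linarith
  have h2 : w.re ^ 2 - w.im ^ 2 = z.re ^ 2 - z.im ^ 2 - 1 := by
    have := congrArg Complex.re hww
    simp [Complex.mul_re] at this
    nlinarith [this]
  clear_value u w
  have hoff : z.im = 0 → 1 < z.re ∨ z.re < -1 := by
    intro hb
    by_contra h
    push_neg at h
    exact hz ⟨z.re, ⟨h.2, h.1⟩, by exact Complex.ext rfl hb.symm⟩
  -- the antiderivative ingredients
  set r : ℝ → ℝ := fun x => Real.sqrt (1 - x ^ 2) with hrdef
  set N : ℝ → ℂ := fun x => Complex.I * (z * x - 1) + w * (r x) with hNdef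
  set v : ℝ → ℂ := fun x => N x / (z - x) with hvdef
  set c : ℂ := -Complex.I * (1 - z ^ 2) / w with hcdef
  set F : ℝ → ℂ := fun x => z * (Real.arcsin x : ℂ) - (r x : ℂ) + c * Complex.log (v x)
    with hFdef
  clear_value r N v c F
  have hr2 : ∀ x : ℝ, x ∈ Set.Icc (-1 : ℝ) 1 → r x ^ 2 = 1 - x ^ 2 := by
    intro x hx
    simp only [hrdef]
    exact Real.sq_sqrt (by nlinarith [hx.1, hx.2])
  have hrpos : ∀ x : ℝ, x ∈ Set.Ioo (-1 : ℝ) 1 → 0 < r x := by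
    intro x hx
    simp only [hrdef]
    exact Real.sqrt_pos.mpr (by nlinarith [hx.1, hx.2])
  have hr1 : r 1 = 0 := by simp [hrdef]
  have hrm1 : r (-1) = 0 := by simp [hrdef]
  have hv1 : v 1 = Complex.I := by
    simp only [hvdef, hNdef, hr1]
    push_cast
    rw [mul_one, mul_zero, add_zero, mul_div_assoc, div_self (by
      intro h; exact hz1 (by linear_combination h)), mul_one]
  have hvm1 : v (-1) = -Complex.I := by
    rw [hvdef]
    simp only [hNdef, hrm1]
    have hne : z + 1 ≠ 0 := fun h => hzm1 (by linear_combination h)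
    rw [Complex.ofReal_zero, mul_zero, add_zero, show ((-1 : ℝ) : ℂ) = -1 by push_cast; ring,
      show z - (-1 : ℂ) = z + 1 by ring,
      show Complex.I * (z * (-1 : ℂ) - 1) = -Complex.I * (z + 1) by ring,
      neg_mul, neg_div, mul_div_assoc, div_self hne, mul_one]
  have hrepos : ∀ x : ℝ, x ∈ Set.Ioo (-1 : ℝ) 1 → 0 < (v x).re := by
    intro x hx
    have hx' : x ∈ Set.Icc (-1 : ℝ) 1 := Set.mem_Icc.mpr ⟨hx.1.le, hx.2.le⟩
    have hzxne : z - (x : ℂ) ≠ 0 := hzx x hx'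
    have hnsq : 0 < Complex.normSq (z - x) := Complex.normSq_pos.mpr hzxne
    have hveq : (v x).re = ((N x).re * (z - (x:ℂ)).re + (N x).im * (z - (x:ℂ)).im)
        / Complex.normSq (z - (x:ℂ)) := by
      simp only [hvdef]
      rw [Complex.div_re]
      ring
    rw [hveq]
    apply div_pos _ hnsq
    have hNre : (N x).re = w.re * r x - z.im * x := by
      simp [hNdef, Complex.mul_re, Complex.mul_im]
      ring
    have hNim : (N x).im = (z.re * x - 1) + w.im * r x := by
      simp [hNdef, Complex.mul_re, Complex.mul_im]
    have hzre : (z - (x:ℂ)).re = z.re - x := by simp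
    have hzim : (z - (x:ℂ)).im = z.im := by simp
    rw [hNre, hNim, hzre, hzim]
    have haux := cheb_aux_ineq z.re z.im w.re w.im h1 h2 h3 hoff x (r x) (hr2 x hx')
    have hrp := hrpos x hx
    have hexpand : (w.re * r x - z.im * x) * (z.re - x) + (z.re * x - 1 + w.im * r x) * z.im
        = r x * (w.re * z.re + w.im * z.im - (w.re * x + z.im * r x)) := by
      linear_combination z.im * (hr2 x hx')
    rw [hexpand]
    exact mul_pos hrp haux
  have hslit : ∀ x : ℝ, x ∈ Set.Icc (-1 : ℝ) 1 → v x ∈ Complex.slitPlane := by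
    intro x hx
    rcases eq_or_lt_of_le hx.1 with h | hl
    · rw [← h, hvm1]
      exact Or.inr (by simp)
    rcases eq_or_lt_of_le hx.2 with h | hr'
    · rw [h, hv1]
      exact Or.inr (by simp)
    exact Or.inl (hrepos x ⟨hl, hr'⟩)
  have hvne : ∀ x : ℝ, x ∈ Set.Icc (-1 : ℝ) 1 → v x ≠ 0 := fun x hx =>
    Complex.slitPlane_ne_zero (hslit x hx)
  -- derivative of F
  have hderiv : ∀ x ∈ Set.Ioo (-1 : ℝ) 1, HasDerivAt F (((r x : ℝ) : ℂ) / (z - x)) x := by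
    intro x hx
    have hx' : x ∈ Set.Icc (-1 : ℝ) 1 := Set.mem_Icc.mpr ⟨hx.1.le, hx.2.le⟩
    have hxne1 : x ≠ 1 := fun h => absurd (h ▸ hx.2) (lt_irrefl 1)
    have hxnem1 : x ≠ -1 := fun h => absurd (h ▸ hx.1) (lt_irrefl (-1))
    have hzxne : z - (x : ℂ) ≠ 0 := hzx x hx'
    have hrx2 : r x ^ 2 = 1 - x ^ 2 := hr2 x hx'
    have hrp : 0 < r x := hrpos x hx
    have hrne : r x ≠ 0 := ne_of_gt hrp
    have hrneC : ((r x : ℝ) : ℂ) ≠ 0 := Complex.ofReal_ne_zero.mpr hrne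
    have hNne : N x ≠ 0 := by
      intro h
      apply hvne x hx'
      simp only [hvdef, h, zero_div]
    -- derivative of r
    have hds : HasDerivAt r (-x / r x) x := by
      have hg : HasDerivAt (fun y : ℝ => 1 - y ^ 2) (-(2 * x)) x := by
        simpa using (hasDerivAt_pow 2 x).const_sub 1
      have h2 := (Real.hasDerivAt_sqrt (by nlinarith [hx.1, hx.2] : 1 - x ^ 2 ≠ 0)).comp x hg
      refine (show HasDerivAt r (1 / (2 * √(1 - x ^ 2)) * -(2 * x)) x by
        rw [hrdef]; exact h2).congr_deriv ?_
      simp only [hrdef]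
      ring
    have hdsC : HasDerivAt (fun y : ℝ => ((r y : ℝ) : ℂ)) (((-x / r x : ℝ) : ℂ)) x :=
      hds.ofReal_comp
    have hid : HasDerivAt (fun y : ℝ => (y : ℂ)) 1 x := by
      simpa using (hasDerivAt_id x).ofReal_comp
    -- derivative of N
    have hN : HasDerivAt N (Complex.I * z + w * ((-x / r x : ℝ) : ℂ)) x := by
      rw [hNdef]
      have ha : HasDerivAt (fun y : ℝ => Complex.I * (z * y - 1)) (Complex.I * z) x := by
        simpa using (((hid.const_mul z).sub_const 1).const_mul Complex.I)
      exact ha.add (hdsC.const_mul w)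
    have hden : HasDerivAt (fun y : ℝ => z - (y : ℂ)) (-1) x := by
      simpa using hid.const_sub z
    have hv : HasDerivAt v
        (((Complex.I * z + w * ((-x / r x : ℝ) : ℂ)) * (z - x) - N x * (-1)) / (z - x) ^ 2) x := by
      rw [hvdef]
      exact (hN.div hden hzxne)
    have hlog : HasDerivAt (fun y => Complex.log (v y))
        ((((Complex.I * z + w * ((-x / r x : ℝ) : ℂ)) * (z - x) - N x * (-1)) / (z - x) ^ 2)
          / v x) x := hv.clog_real (hslit x hx')
    have harc : HasDerivAt (fun y : ℝ => z * (Real.arcsin y : ℂ))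
        (z * ((1 / Real.sqrt (1 - x ^ 2) : ℝ) : ℂ)) x :=
      ((Real.hasDerivAt_arcsin hxnem1 hxne1).ofReal_comp).const_mul z
    have hF : HasDerivAt F
        (z * ((1 / Real.sqrt (1 - x ^ 2) : ℝ) : ℂ) - ((-x / r x : ℝ) : ℂ) +
          c * ((((Complex.I * z + w * ((-x / r x : ℝ) : ℂ)) * (z - x) - N x * (-1))
            / (z - x) ^ 2) / v x)) x := by
      rw [hFdef]
      exact (harc.sub hdsC).add (hlog.const_mul c)
    convert hF using 1
    -- now the algebraic identity
    have hsq : Real.sqrt (1 - x ^ 2) = r x := by simp only [hrdef]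
    rw [hsq]
    simp only [hvdef, hcdef]
    have hrC : ((r x : ℝ) : ℂ) ^ 2 = 1 - (x : ℂ) ^ 2 := by
      rw [← Complex.ofReal_pow, hrx2]
      push_cast
      ring
    have hkey : (Complex.I * z + w * ((-x / r x : ℝ) : ℂ)) * (z - ↑x) - N x * (-1)
        = Complex.I * w * N x / ((r x : ℝ) : ℂ) := by
      rw [eq_div_iff hrneC]
      simp only [hNdef]
      push_cast
      field_simp [hrneC]
      linear_combination (norm := ring_nf) (-(((r x : ℝ) : ℂ) * Complex.I)) * hw2 + w * hrC
        + (w * (1 - z * (x : ℂ))) * Complex.I_sq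
    rw [hkey]
    have hlogd : Complex.I * w * N x / ((r x : ℝ) : ℂ) / (z - (x : ℂ)) ^ 2 / (N x / (z - (x : ℂ)))
        = Complex.I * w / (((r x : ℝ) : ℂ) * (z - (x : ℂ))) := by
      field_simp
    rw [hlogd]
    push_cast
    field_simp
    linear_combination (norm := ring_nf) hrC
      + (1 - z ^ 2) * Complex.I_sq
  -- continuity of F
  have hrcont : Continuous r := by
    rw [hrdef]
    exact Real.continuous_sqrt.comp (continuous_const.sub (continuous_pow 2))
  have hNcont : Continuous N := by
    rw [hNdef]
    exact (continuous_const.mul ((continuous_const.mul Complex.continuous_ofReal).sub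
      continuous_const)).add (continuous_const.mul (Complex.continuous_ofReal.comp hrcont))
  have hvcont : ContinuousOn v (Set.Icc (-1 : ℝ) 1) := by
    rw [hvdef]
    exact hNcont.continuousOn.div
      ((continuous_const.sub Complex.continuous_ofReal).continuousOn) hzx
  have hFc : ContinuousOn F (Set.Icc (-1 : ℝ) 1) := by
    rw [hFdef]
    refine ContinuousOn.add (ContinuousOn.sub ?_ ?_) (ContinuousOn.mul continuousOn_const
      (hvcont.clog hslit))
    · exact (continuous_const.mul
        (Complex.continuous_ofReal.comp Real.continuous_arcsin)).continuousOn
    · exact (Complex.continuous_ofReal.comp hrcont).continuousOn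
  -- integrability
  have hint : IntervalIntegrable (fun x : ℝ => ((r x : ℝ) : ℂ) / (z - x))
      MeasureTheory.volume (-1) 1 := by
    apply ContinuousOn.intervalIntegrable
    rw [Set.uIcc_of_le (by norm_num : (-1:ℝ) ≤ 1)]
    exact ((Complex.continuous_ofReal.comp hrcont).continuousOn).div
      ((continuous_const.sub Complex.continuous_ofReal).continuousOn) hzx
  have hFTC := intervalIntegral.integral_eq_sub_of_hasDerivAt_of_le
    (by norm_num : (-1:ℝ) ≤ 1) hFc hderiv hint
  simp only [hrdef] at hFTC
  rw [hFTC]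
  -- endpoint values
  have hF1 : F 1 = z * ((Real.pi / 2 : ℝ) : ℂ) + c * ((Real.pi : ℂ) / 2 * Complex.I) := by
    rw [hFdef]
    simp only [hv1, hr1, Real.arcsin_one, Complex.log_I, Complex.ofReal_zero]
    push_cast
    ring
  have hFm1 : F (-1) = -(z * ((Real.pi / 2 : ℝ) : ℂ)) - c * ((Real.pi : ℂ) / 2 * Complex.I) := by
    rw [hFdef]
    simp only [hvm1, hrm1, Complex.log_neg_I, Complex.ofReal_zero]
    rw [show Real.arcsin (-1) = -(Real.pi / 2) by simp [Real.arcsin_neg]]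
    push_cast
    ring
  rw [hF1, hFm1, hcdef, hwdef]
  have hπ : (Real.pi : ℂ) ≠ 0 := Complex.ofReal_ne_zero.mpr Real.pi_ne_zero
  have hu0 : u ≠ 0 := by
    intro h
    exact hw0 (by rw [hwdef, h, mul_zero])
  have hw2' : (z * u) ^ 2 = z ^ 2 - 1 := by rw [← hwdef]; exact hw2
  push_cast
  rw [div_mul_eq_mul_div, div_eq_iff hπ]
  field_simp [hz0, hu0]
  linear_combination (norm := ring_nf) 2 * hw2'
    + (2 * (z ^ 2 - 1)) * Complex.I_sq
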